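/- Let n ≥ 1 and let Δ be a real symmetric n × n matrix with zero diagonal. Then there exist a map g : Fin n → ℝ^n (Euclidean space of dimension n) and a constant c ≥ 0 such that for all i ≠ j, ‖g(i) − g(j)‖² = Δ(i,j) + c. In particular, the rank-ordering of the off-diagonal entries of Δ is exactly the rank-ordering of the squared distances ‖g(i) − g(j)‖², and any additive gap Δ(i,j) + m ≤ Δ(k,ℓ) is preserved as ‖g(i) − g(j)‖² + m ≤ ‖g(k) − g(ℓ)‖². -/

import Mathlib

/-- Constant-shift embedding: any symmetric matrix `Δ` with zero diagonal can be
realized, up to an additive nonnegative constant `c`, as squared distances of an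
embedding into `ℝ^n`: `‖g i - g j‖² = Δ i j + c` for all `i ≠ j`. -/
theorem constant_shift_embedding {n : ℕ} (hn : 1 ≤ n)
    (Δ : Matrix (Fin n) (Fin n) ℝ) (hΔ : Δ.IsSymm) (hdiag : ∀ i, Δ i i = 0) :
    ∃ (g : Fin n → EuclideanSpace ℝ (Fin n)) (c : ℝ), 0 ≤ c ∧
      ∀ i j, i ≠ j → ‖g i - g j‖ ^ 2 = Δ i j + c := by
  set S : ℝ := ∑ i, ∑ j, |Δ i j| with hS
  have hS0 : 0 ≤ S := Finset.sum_nonneg fun i _ => Finset.sum_nonneg fun j _ => abs_nonneg _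
  set M : Matrix (Fin n) (Fin n) ℝ := (S/2) • (1 : Matrix (Fin n) (Fin n) ℝ) - (1/2 : ℝ) • Δ with hM
  have hMsymm : M.IsHermitian := by
    unfold Matrix.IsHermitian
    ext i j
    simp [hM, Matrix.conjTranspose_apply, Matrix.one_apply,
      ← Matrix.IsSymm.apply hΔ i j, eq_comm (a := i)]
  have key : ∀ x : Fin n → ℝ, ∑ i, ∑ j, Δ i j * x j * x i ≤ S * ∑ k, x k ^ 2 := by
    intro x
    calc ∑ i, ∑ j, Δ i j * x j * x i ≤ ∑ i, ∑ j, |Δ i j| * ∑ k, x k ^ 2 := by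
          apply Finset.sum_le_sum; intro i _
          apply Finset.sum_le_sum; intro j _
          calc Δ i j * x j * x i ≤ |Δ i j * x j * x i| := le_abs_self _
            _ = |Δ i j| * (|x j| * |x i|) := by rw [abs_mul, abs_mul, mul_assoc]
            _ ≤ |Δ i j| * ∑ k, x k ^ 2 := by
                apply mul_le_mul_of_nonneg_left _ (abs_nonneg _)
                have h2 : |x j| * |x i| ≤ (x j ^ 2 + x i ^ 2) / 2 := by
                  nlinarith [sq_nonneg (|x j| - |x i|), sq_abs (x j), sq_abs (x i)]
                refine h2.trans ?_
                have hj : x j ^ 2 ≤ ∑ k, x k ^ 2 :=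
                  Finset.single_le_sum (fun k _ => sq_nonneg (x k)) (Finset.mem_univ j)
                have hi : x i ^ 2 ≤ ∑ k, x k ^ 2 :=
                  Finset.single_le_sum (fun k _ => sq_nonneg (x k)) (Finset.mem_univ i)
                linarith
      _ = S * ∑ k, x k ^ 2 := by rw [hS, Finset.sum_mul]; simp [Finset.sum_mul]
  have hMpsd : M.PosSemidef := by
    refine Matrix.PosSemidef.of_dotProduct_mulVec_nonneg hMsymm fun x => ?_
    have hx : star x = x := by simp
    rw [hx, hM, Matrix.sub_mulVec, Matrix.smul_mulVec, Matrix.smul_mulVec,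
      Matrix.one_mulVec, dotProduct_sub, dotProduct_smul, dotProduct_smul]
    have h1 : dotProduct x x = ∑ k, x k ^ 2 := by simp [dotProduct, sq]
    have h2 : dotProduct x (Δ.mulVec x) = ∑ i, ∑ j, Δ i j * x j * x i := by
      simp [dotProduct, Matrix.mulVec, Finset.mul_sum, mul_comm]
    rw [h1, h2]
    have := key x
    have hnn : 0 ≤ ∑ k, x k ^ 2 := Finset.sum_nonneg fun k _ => sq_nonneg _
    simp only [smul_eq_mul]
    nlinarith
  obtain ⟨B, hB⟩ : ∃ B : Matrix (Fin n) (Fin n) ℝ, M = B.conjTranspose * B := by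
    open scoped MatrixOrder Matrix.Norms.L2Operator in
    obtain ⟨B, hB⟩ := CStarAlgebra.nonneg_iff_eq_star_mul_self.mp hMpsd.nonneg
    exact ⟨B, hB⟩
  set g : Fin n → EuclideanSpace ℝ (Fin n) := fun i => WithLp.toLp 2 (fun k => B k i) with hg
  have hinner : ∀ a b : Fin n, @inner ℝ _ _ (g a) (g b) = M a b := by
    intro a b
    rw [hB]
    simp [hg, PiLp.inner_apply, Matrix.mul_apply, Matrix.conjTranspose_apply, mul_comm]
  refine ⟨g, S, hS0, fun i j hij => ?_⟩
  have hMij : M i j = -(1/2) * Δ i j := by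
    simp [hM, Matrix.one_apply, hij]
  have hMii : ∀ i, M i i = S/2 := by
    intro i; simp [hM, Matrix.one_apply, hdiag i]
  rw [norm_sub_sq_real, ← real_inner_self_eq_norm_sq, ← real_inner_self_eq_norm_sq,
    hinner, hinner, hinner, hMii, hMii, hMij]
  ring
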